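/- Let A₁,…,A_k be bounded operators on H. For every *-polynomial p in k operator variables, ‖p(A₁,…,A_k)‖ ≤ ‖p(Ψ_{A₁},…,Ψ_{A_k})‖. (This is the step 'ψ̃ majorizes ψ': in the paper it is proved by realizing Ψ_{A_i} = ψ(e_i)⊗U as unitarily equivalent, via the Fourier transform in the second variable, to the direct integral over λ ∈ 𝕋 of the scaled operators λ·A_i, and evaluating at λ = 1.) -/

import Mathlib

open MeasureTheory ContinuousLinearMap

/-- Evaluation of a word in formal letters `x i` (`b = false`) and `x i *` (`b = true`)
at the tuple of operators `T`. -/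
noncomputable def evalWord {k : ℕ} {H : Type*} [NormedAddCommGroup H] [InnerProductSpace ℂ H]
    [CompleteSpace H] (T : Fin k → H →L[ℂ] H) : List (Fin k × Bool) → H →L[ℂ] H
  | [] => 1
  | (i, b) :: w => (if b then adjoint (T i) else T i) * evalWord T w

/-- A *-polynomial in `k` operator variables is a finite ℂ-linear combination of words;
`evalPoly T p` is its evaluation at the operators `T 0, ..., T (k-1)`. -/
noncomputable def evalPoly {k : ℕ} {H : Type*} [NormedAddCommGroup H] [InnerProductSpace ℂ H]
    [CompleteSpace H] (T : Fin k → H →L[ℂ] H) (p : List (ℂ × List (Fin k × Bool))) : H →L[ℂ] H :=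
  (p.map fun cw => cw.1 • evalWord T cw.2).sum

/-- The degree of a *-polynomial: the maximal length of a word occurring in it. -/
def polyDegree {k : ℕ} (p : List (ℂ × List (Fin k × Bool))) : ℕ :=
  (p.map fun cw => cw.2.length).foldr max 0

/-- The signed shift amount of a word: letters shift by `+1`, starred letters by `-1`. -/
def wsh {k : ℕ} : List (Fin k × Bool) → ℤ
  | [] => 0
  | (_, b) :: w => (if b then (-1 : ℤ) else 1) + wsh w

lemma abs_wsh_le {k : ℕ} : ∀ w : List (Fin k × Bool), |wsh w| ≤ w.length
  | [] => by simp [wsh]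
  | (i, b) :: w => by
      have ih := abs_wsh_le w
      have h1 : |(if b then (-1 : ℤ) else 1)| = 1 := by cases b <;> simp
      calc |wsh ((i, b) :: w)| ≤ |(if b then (-1 : ℤ) else 1)| + |wsh w| := abs_add_le _ _
        _ ≤ ((i, b) :: w).length := by rw [h1]; simp [List.length_cons]; omega

lemma length_le_polyDegree {k : ℕ} {p : List (ℂ × List (Fin k × Bool))}
    {cw : ℂ × List (Fin k × Bool)} (h : cw ∈ p) : cw.2.length ≤ polyDegree p := by
  induction p with
  | nil => cases h
  | cons a t ih =>
      rcases List.mem_cons.mp h with rfl | h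
      · exact le_max_left _ _
      · exact (ih h).trans (le_max_right _ _)

section Aux
variable {H : Type} [NormedAddCommGroup H] [InnerProductSpace ℂ H] [CompleteSpace H]

local notation "E" => lp (fun _ : ℤ => H) 2

omit [InnerProductSpace ℂ H] [CompleteSpace H] in
lemma single_co (i m : ℤ) (v : H) : (lp.single 2 i v : E) m = if m = i then v else 0 := by
  by_cases h : m = i
  · subst h; simp [lp.single_apply_self]
  · simp [lp.single_apply_ne _ _ _ h, h]

lemma psi_single (Ψ : (H →L[ℂ] H) → E →L[ℂ] E)
    (hΨ : ∀ (B : H →L[ℂ] H) (ξ : E) (n : ℤ), (Ψ B ξ) n = B (ξ (n - 1)))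
    (B : H →L[ℂ] H) (n : ℤ) (u : H) :
    Ψ B (lp.single 2 n u) = lp.single 2 (n + 1) (B u) := by
  apply lp.ext
  funext m
  rw [show ((Ψ B (lp.single 2 n u) : E) : ∀ _ : ℤ, H) m = (Ψ B (lp.single 2 n u) : E) m from rfl]
  rw [hΨ, single_co, single_co]
  by_cases h : m = n + 1
  · rw [if_pos (by omega : m - 1 = n), if_pos h]
  · rw [if_neg (by omega : ¬ m - 1 = n), if_neg h, map_zero]

lemma adj_psi (Ψ : (H →L[ℂ] H) → E →L[ℂ] E)
    (hΨ : ∀ (B : H →L[ℂ] H) (ξ : E) (n : ℤ), (Ψ B ξ) n = B (ξ (n - 1)))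
    (B : H →L[ℂ] H) (ξ : E) (n : ℤ) :
    adjoint (Ψ B) ξ n = adjoint B (ξ (n + 1)) := by
  apply ext_inner_left ℂ
  intro u
  calc inner ℂ u (adjoint (Ψ B) ξ n)
      = inner ℂ (lp.single 2 n u : E) (adjoint (Ψ B) ξ) :=
        (lp.inner_single_left (𝕜 := ℂ) (G := fun _ : ℤ => H) _ _ _).symm
    _ = inner ℂ (Ψ B (lp.single 2 n u)) ξ := adjoint_inner_right _ _ _
    _ = inner ℂ (lp.single 2 (n+1) (B u) : E) ξ := by rw [psi_single Ψ hΨ]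
    _ = inner ℂ (B u) (ξ (n+1)) := lp.inner_single_left (𝕜 := ℂ) (G := fun _ : ℤ => H) _ _ _
    _ = inner ℂ u (adjoint B (ξ (n+1))) := (adjoint_inner_right _ _ _).symm

lemma evalWord_psi (Ψ : (H →L[ℂ] H) → E →L[ℂ] E)
    (hΨ : ∀ (B : H →L[ℂ] H) (ξ : E) (n : ℤ), (Ψ B ξ) n = B (ξ (n - 1)))
    (hadj : ∀ (B : H →L[ℂ] H) (ξ : E) (n : ℤ), adjoint (Ψ B) ξ n = adjoint B (ξ (n + 1)))
    {k : ℕ} (A : Fin k → H →L[ℂ] H) (w : List (Fin k × Bool)) :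
    ∀ (ξ : E) (n : ℤ),
      evalWord (fun i => Ψ (A i)) w ξ n = evalWord A w (ξ (n - wsh w)) := by
  induction w with
  | nil => intro ξ n; simp [evalWord, wsh]
  | cons ib w ih =>
      obtain ⟨i, b⟩ := ib
      intro ξ n
      cases b
      · have h1 : n - 1 - wsh w = n - wsh ((i, false) :: w) := by simp [wsh]; ring
        simp only [evalWord, Bool.false_eq_true, eq_self_iff_true, if_false, if_true, mul_def, coe_comp', Function.comp_apply]
        rw [hΨ, ih ξ (n - 1), h1]
      · have h1 : n + 1 - wsh w = n - wsh ((i, true) :: w) := by simp [wsh]; ring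
        simp only [evalWord, Bool.false_eq_true, eq_self_iff_true, if_false, if_true, mul_def, coe_comp', Function.comp_apply]
        rw [hadj, ih ξ (n + 1), h1]

lemma evalPoly_apply_eq {k : ℕ} (T : Fin k → H →L[ℂ] H)
    (p : List (ℂ × List (Fin k × Bool))) (x : H) :
    evalPoly T p x = (p.map fun cw => cw.1 • evalWord T cw.2 x).sum := by
  induction p with
  | nil => simp [evalPoly]
  | cons a t ih =>
      simp only [evalPoly, List.map_cons, List.sum_cons, add_apply, smul_apply] at *
      rw [ih]

lemma evalPoly_psi_apply (Ψ : (H →L[ℂ] H) → E →L[ℂ] E)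
    (hΨ : ∀ (B : H →L[ℂ] H) (ξ : E) (n : ℤ), (Ψ B ξ) n = B (ξ (n - 1)))
    (hadj : ∀ (B : H →L[ℂ] H) (ξ : E) (n : ℤ), adjoint (Ψ B) ξ n = adjoint B (ξ (n + 1)))
    {k : ℕ} (A : Fin k → H →L[ℂ] H) (p : List (ℂ × List (Fin k × Bool))) (ξ : E) (n : ℤ) :
    evalPoly (fun i => Ψ (A i)) p ξ n
      = (p.map fun cw => cw.1 • evalWord A cw.2 (ξ (n - wsh cw.2))).sum := by
  induction p with
  | nil =>
      simp only [evalPoly, List.map_nil, List.sum_nil, zero_apply]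
      simp [lp.coeFn_zero]
  | cons a t ih =>
      simp only [evalPoly, List.map_cons, List.sum_cons, add_apply, smul_apply] at *
      rw [lp.coeFn_add, Pi.add_apply, lp.coeFn_smul, Pi.smul_apply, ih,
        evalWord_psi Ψ hΨ hadj]

end Aux

/-- For bounded operators `A₁,…,A_k` on `H` and every *-polynomial `p`,
`‖p(A₁,…,A_k)‖ ≤ ‖p(Ψ_{A₁},…,Ψ_{A_k})‖`, where `(Ψ_A ξ)(n) = A(ξ(n−1))` on `ℓ²(ℤ,H)`. -/
theorem stmt3 {H : Type} [NormedAddCommGroup H] [InnerProductSpace ℂ H] [CompleteSpace H]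
    {k : ℕ} (A : Fin k → H →L[ℂ] H)
    (Ψ : (H →L[ℂ] H) → lp (fun _ : ℤ => H) 2 →L[ℂ] lp (fun _ : ℤ => H) 2)
    (hΨ : ∀ (B : H →L[ℂ] H) (ξ : lp (fun _ : ℤ => H) 2) (n : ℤ), (Ψ B ξ) n = B (ξ (n - 1)))
    (p : List (ℂ × List (Fin k × Bool))) :
    ‖evalPoly A p‖ ≤ ‖evalPoly (fun i => Ψ (A i)) p‖ := by
  have hadj : ∀ (B : H →L[ℂ] H) (ξ : lp (fun _ : ℤ => H) 2) (n : ℤ),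
      adjoint (Ψ B) ξ n = adjoint B (ξ (n + 1)) := adj_psi Ψ hΨ
  set T := evalPoly (fun i => Ψ (A i)) p with hTdef
  refine opNorm_le_bound _ (norm_nonneg T) fun v => ?_
  set d : ℕ := polyDegree p with hd
  have hcast : ∀ x : ℝ, x ^ (2 : ℝ) = x ^ 2 := fun x => by
    rw [show (2 : ℝ) = ((2 : ℕ) : ℝ) by norm_num, Real.rpow_natCast]
  have h2R : ((2 : ENNReal)).toReal = (2 : ℝ) := by norm_num
  have h2pos : 0 < ((2 : ENNReal)).toReal := by norm_num
  have key : ∀ M : ℕ,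
      (M : ℝ) * ‖evalPoly A p v‖ ^ 2 ≤ ((M : ℝ) + 2 * d) * (‖T‖ * ‖v‖) ^ 2 := by
    intro M
    set N : ℕ := M + 2 * d with hN
    have hinj : Function.Injective (fun n : ℕ => (n : ℤ) + d) := by
      intro a b hab
      simp only at hab
      omega
    set s : Finset ℤ := Finset.image (fun n : ℕ => (n : ℤ) + d) (Finset.range N) with hs
    set ξ : lp (fun _ : ℤ => H) 2 := ∑ i ∈ s, lp.single 2 i v with hξ
    have hmem : ∀ m : ℤ, m ∈ s ↔ (d : ℤ) ≤ m ∧ m < (N : ℤ) + d := by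
      intro m
      simp only [hs, Finset.mem_image, Finset.mem_range]
      constructor
      · rintro ⟨n, hn, rfl⟩; omega
      · rintro ⟨h1, h2⟩; exact ⟨(m - d).toNat, by omega, by omega⟩
    have hco : ∀ m : ℤ, ξ m = if (d : ℤ) ≤ m ∧ m < (N : ℤ) + d then v else 0 := by
      intro m
      rw [hξ]
      rw [show ((∑ i ∈ s, lp.single 2 i v : lp (fun _ : ℤ => H) 2) : ∀ _ : ℤ, H) m
          = ∑ i ∈ s, (lp.single 2 i v : lp (fun _ : ℤ => H) 2) m from by
        rw [lp.coeFn_sum]; simp]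
      rw [Finset.sum_congr rfl fun i _ => single_co i m v]
      rw [Finset.sum_ite_eq s m fun _ => v]
      by_cases h : m ∈ s
      · rw [if_pos h, if_pos ((hmem m).mp h)]
      · rw [if_neg h, if_neg fun hc => h ((hmem m).mpr hc)]
    have hcard : s.card = N := by
      rw [hs, Finset.card_image_of_injective _ hinj, Finset.card_range]
    have hξ2 : ‖ξ‖ ^ 2 = (N : ℝ) * ‖v‖ ^ 2 := by
      have hns := lp.norm_sum_single (p := 2) h2pos (fun _ : ℤ => v) s
      rw [h2R] at hns
      rw [← hcast, hξ]
      rw [hns, Finset.sum_const, hcard, nsmul_eq_mul, hcast]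
    have habs : ∀ cw ∈ p, |wsh cw.2| ≤ (d : ℤ) := fun cw h =>
      le_trans (abs_wsh_le cw.2) (by exact_mod_cast length_le_polyDegree h)
    have hgood : ∀ m : ℤ, 2 * (d : ℤ) ≤ m → m < (M : ℤ) + 2 * d →
        T ξ m = evalPoly A p v := by
      intro m h1 h2
      rw [hTdef, evalPoly_psi_apply Ψ hΨ hadj, evalPoly_apply_eq]
      congr 1
      refine List.map_congr_left fun cw hcw => ?_
      obtain ⟨ha1, ha2⟩ := abs_le.mp (habs cw hcw)
      rw [hco, if_pos ⟨by omega, by omega⟩]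
    set g : Finset ℤ := Finset.image (fun n : ℕ => (n : ℤ) + 2 * d) (Finset.range M) with hg
    have hginj : Function.Injective (fun n : ℕ => (n : ℤ) + 2 * d) := by
      intro a b hab
      simp only at hab
      omega
    have hgcard : g.card = M := by
      rw [hg, Finset.card_image_of_injective _ hginj, Finset.card_range]
    have hsum : ∑ m ∈ g, ‖T ξ m‖ ^ (2 : ℝ) ≤ ‖T ξ‖ ^ (2 : ℝ) := by
      have h := lp.sum_rpow_le_norm_rpow (p := 2) h2pos (T ξ) g
      rwa [h2R] at h
    have hgval : ∑ m ∈ g, ‖T ξ m‖ ^ (2 : ℝ) = (M : ℝ) * ‖evalPoly A p v‖ ^ 2 := by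
      rw [Finset.sum_congr rfl fun m hm => ?_]
      · rw [Finset.sum_const, hgcard, nsmul_eq_mul]
      · obtain ⟨n, hn, rfl⟩ := Finset.mem_image.mp hm
        rw [Finset.mem_range] at hn
        rw [hgood _ (by omega) (by omega), hcast]
    have hTle : ‖T ξ‖ ≤ ‖T‖ * ‖ξ‖ := le_opNorm T ξ
    calc (M : ℝ) * ‖evalPoly A p v‖ ^ 2 = ∑ m ∈ g, ‖T ξ m‖ ^ (2 : ℝ) := hgval.symm
      _ ≤ ‖T ξ‖ ^ (2 : ℝ) := hsum
      _ ≤ (‖T‖ * ‖ξ‖) ^ (2 : ℝ) :=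
          Real.rpow_le_rpow (norm_nonneg _) hTle (by norm_num)
      _ = ‖T‖ ^ 2 * ‖ξ‖ ^ 2 := by rw [hcast, mul_pow]
      _ = ((M : ℝ) + 2 * d) * (‖T‖ * ‖v‖) ^ 2 := by
          rw [hξ2, hN, mul_pow]
          push_cast
          ring
  -- pass to the limit M → ∞
  have hfin : ‖evalPoly A p v‖ ^ 2 ≤ (‖T‖ * ‖v‖) ^ 2 := by
    set a := ‖evalPoly A p v‖ ^ 2 with ha
    set b := (‖T‖ * ‖v‖) ^ 2 with hb
    have hb0 : 0 ≤ b := sq_nonneg _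
    have hlim : Filter.Tendsto (fun M : ℕ => b + (2 * d * b) / (M : ℝ))
        Filter.atTop (nhds b) := by
      have := tendsto_const_nhds (x := b) (f := Filter.atTop (α := ℕ)) |>.add
        (tendsto_const_div_atTop_nhds_zero_nat (2 * d * b))
      simpa using this
    refine ge_of_tendsto hlim ?_
    filter_upwards [Filter.eventually_gt_atTop 0] with M hM
    have hM' : (0 : ℝ) < M := by exact_mod_cast hM
    have h := key M
    rw [← mul_le_mul_iff_of_pos_right hM']
    have hMne : (M : ℝ) ≠ 0 := hM'.ne'
    field_simp
    nlinarith [h]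
  have h0 : 0 ≤ ‖T‖ * ‖v‖ := mul_nonneg (norm_nonneg _) (norm_nonneg _)
  nlinarith [hfin, norm_nonneg (evalPoly A p v), h0, sq_nonneg (‖evalPoly A p v‖ + ‖T‖ * ‖v‖)]
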